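/- Let n ≥ 4 be an integer, x := (1, 1/√2, …, 1/√n)ᵗ, and A := x·xᵗ (so A has entries 1/√(ij)). Then ‖A‖_Δ < (2/√(log h(A)))·‖A‖ and ‖A‖_P < (4/log h(A))·‖A‖. -/

import Mathlib

open scoped BigOperators

/-- Euclidean norm of a finitely-indexed complex vector. -/
noncomputable def en {ι : Type*} [Fintype ι] (v : ι → ℂ) : ℝ :=
  Real.sqrt (∑ i, ‖v i‖ ^ 2)

/-- The L¹ norm of a vector. -/
noncomputable def vn1 {ι : Type*} [Fintype ι] (v : ι → ℂ) : ℝ := ∑ i, ‖v i‖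

/-- The L^∞ norm of a vector. -/
noncomputable def vnInf {ι : Type*} [Fintype ι] (v : ι → ℂ) : ℝ := ⨆ i, ‖v i‖

/-- The induced L²-operator norm of a matrix. -/
noncomputable def opNorm2 {ι κ : Type*} [Fintype ι] [Fintype κ]
    (A : Matrix ι κ ℂ) : ℝ :=
  sInf {C | 0 ≤ C ∧ ∀ x : κ → ℂ, en (A.mulVec x) ≤ C * en x}

/-- The induced L¹-operator norm of a matrix. -/
noncomputable def opNorm1 {ι κ : Type*} [Fintype ι] [Fintype κ]
    (A : Matrix ι κ ℂ) : ℝ :=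
  sInf {C | 0 ≤ C ∧ ∀ x : κ → ℂ, vn1 (A.mulVec x) ≤ C * vn1 x}

/-- The induced L^∞-operator norm of a matrix. -/
noncomputable def opNormInf {ι κ : Type*} [Fintype ι] [Fintype κ]
    (A : Matrix ι κ ℂ) : ℝ :=
  sInf {C | 0 ≤ C ∧ ∀ x : κ → ℂ, vnInf (A.mulVec x) ≤ C * vnInf x}

/-- The height of a matrix: √(‖A‖₁‖A‖_∞)/‖A‖. -/
noncomputable def height {ι κ : Type*} [Fintype ι] [Fintype κ]
    (A : Matrix ι κ ℂ) : ℝ :=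
  Real.sqrt (opNorm1 A * opNormInf A) / opNorm2 A

/-- The discrete norm: max of ‖Aξ‖/‖ξ‖ over non-zero binary vectors ξ. -/
noncomputable def dnorm {ι κ : Type*} [Fintype ι] [Fintype κ]
    (A : Matrix ι κ ℂ) : ℝ :=
  sSup {r | ∃ ξ : κ → ℂ, (∀ i, ξ i = 0 ∨ ξ i = 1) ∧ ξ ≠ 0 ∧
    r = en (A.mulVec ξ) / en ξ}

/-- The discrete Rayleigh norm: max of |ξᵗAη|/(‖ξ‖‖η‖) over non-zero binary
vectors ξ, η. -/
noncomputable def pnorm {ι κ : Type*} [Fintype ι] [Fintype κ]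
    (A : Matrix ι κ ℂ) : ℝ :=
  sSup {r | ∃ (ξ : ι → ℂ) (η : κ → ℂ),
    (∀ i, ξ i = 0 ∨ ξ i = 1) ∧ ξ ≠ 0 ∧
    (∀ j, η j = 0 ∨ η j = 1) ∧ η ≠ 0 ∧
    r = ‖∑ i, ∑ j, ξ i * A i j * η j‖ / (en ξ * en η)}
noncomputable def xr (i : ℕ) : ℝ := 1 / Real.sqrt (i + 1)

lemma xr_pos (i : ℕ) : 0 < xr i := by
  unfold xr; positivity

lemma xr_le_one (i : ℕ) : xr i ≤ 1 := by
  unfold xr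
  rw [div_le_one (by positivity)]
  exact Real.one_le_sqrt.mpr (by linarith [Nat.cast_nonneg (α := ℝ) i])

lemma xr_sq (i : ℕ) : xr i ^ 2 = 1 / (i + 1) := by
  unfold xr
  rw [div_pow, one_pow, Real.sq_sqrt (by positivity)]

lemma xr_zero : xr 0 = 1 := by simp [xr]

lemma xr_antitone {i j : ℕ} (h : i ≤ j) : xr j ≤ xr i := by
  unfold xr
  apply one_div_le_one_div_of_le (by positivity)
  exact Real.sqrt_le_sqrt (by exact_mod_cast by linarith [(Nat.cast_le (α := ℝ)).mpr h])

/-- Key combinatorial lemma: sum of `1/√(i+1)` over any finite set of naturals of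
cardinality `k` is at most `2√k`. -/
lemma key (k : ℕ) : ∀ F : Finset ℕ, F.card = k → ∑ i ∈ F, xr i ≤ 2 * Real.sqrt k := by
  induction k with
  | zero => intro F hF; simp [Finset.card_eq_zero.mp hF]
  | succ k ih =>
    intro F hF
    have hne : F.Nonempty := Finset.card_pos.mp (by omega)
    set m := F.max' hne with hm
    have hmem : m ∈ F := F.max'_mem hne
    have h1 : ∑ i ∈ F.erase m, xr i ≤ 2 * Real.sqrt k := by
      apply ih
      rw [Finset.card_erase_of_mem hmem, hF]; omega
    have hsum : ∑ i ∈ F, xr i = xr m + ∑ i ∈ F.erase m, xr i :=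
      (Finset.add_sum_erase F xr hmem).symm
    have hcard : k + 1 ≤ m + 1 := by
      have : F ⊆ Finset.range (m + 1) := by
        intro a ha
        simp only [Finset.mem_range]
        exact Nat.lt_succ_of_le (F.le_max' a ha)
      have := Finset.card_le_card this
      rw [hF, Finset.card_range] at this
      exact this
    have hxm : xr m ≤ 1 / Real.sqrt (k + 1) := by
      have := xr_antitone (show k ≤ m by omega)
      unfold xr at this ⊢
      push_cast at this ⊢
      linarith
    have hfin : 2 * Real.sqrt k + 1 / Real.sqrt (k + 1) ≤ 2 * Real.sqrt (k + 1) := by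
      set a := Real.sqrt k with ha
      set b := Real.sqrt (k + 1) with hb
      have ha2 : a ^ 2 = k := Real.sq_sqrt (by positivity)
      have hb2 : b ^ 2 = k + 1 := Real.sq_sqrt (by positivity)
      have ha0 : 0 ≤ a := Real.sqrt_nonneg _
      have hb0 : 0 < b := Real.sqrt_pos.mpr (by positivity)
      rw [← sub_nonneg]
      have key2 : 2 * a * b ≤ 2 * (k:ℝ) + 1 := by nlinarith [sq_nonneg (a - b)]
      have heq : 2 * b - (2 * a + 1 / b) = (2 * b ^ 2 - 2 * a * b - 1) / b := by
        field_simp; ring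
      rw [heq]
      apply div_nonneg _ hb0.le
      nlinarith
    have hc : (((k : ℝ) + 1)) = ((k + 1 : ℕ) : ℝ) := by push_cast; ring
    rw [hsum]
    calc xr m + ∑ i ∈ F.erase m, xr i ≤ 1 / Real.sqrt (k+1) + 2 * Real.sqrt k := by linarith
      _ ≤ 2 * Real.sqrt (k+1) := by linarith
      _ = 2 * Real.sqrt ((k+1:ℕ)) := by rw [hc]

/-- Version for finsets of `Fin n`. -/
lemma key' {n : ℕ} (F : Finset (Fin n)) :
    ∑ i ∈ F, xr (i : ℕ) ≤ 2 * Real.sqrt F.card := by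
  have himg := key (F.image Fin.val).card (F.image Fin.val) rfl
  rw [Finset.sum_image (fun a _ b _ h => Fin.val_injective h)] at himg
  rwa [Finset.card_image_of_injective _ Fin.val_injective] at himg

open scoped Classical in
lemma binary_sum {n : ℕ} (ξ : Fin n → ℂ) (hbin : ∀ i, ξ i = 0 ∨ ξ i = 1) (w : Fin n → ℝ) :
    ∑ j, (w j : ℂ) * ξ j
      = ((∑ j ∈ Finset.univ.filter (fun i => ξ i = 1), w j : ℝ) : ℂ) := by
  push_cast
  rw [Finset.sum_filter]
  apply Finset.sum_congr rfl
  intro j _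
  rcases hbin j with h | h <;> simp [h]

open scoped Classical in
lemma binary_en {n : ℕ} (ξ : Fin n → ℂ) (hbin : ∀ i, ξ i = 0 ∨ ξ i = 1) :
    en ξ = Real.sqrt (Finset.univ.filter (fun i => ξ i = 1)).card := by
  unfold en
  congr 1
  have h : ∀ i, ‖ξ i‖ ^ 2 = if ξ i = 1 then (1:ℝ) else 0 := by
    intro i; rcases hbin i with h | h <;> simp [h]
  rw [Finset.sum_congr rfl (fun i _ => h i), Finset.sum_boole]

open scoped Classical in
lemma binary_card_pos {n : ℕ} (ξ : Fin n → ℂ) (hbin : ∀ i, ξ i = 0 ∨ ξ i = 1)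
    (hne : ξ ≠ 0) : 0 < (Finset.univ.filter (fun i => ξ i = 1)).card := by
  rw [Finset.card_pos]
  obtain ⟨i, hi⟩ := Function.ne_iff.mp hne
  refine ⟨i, Finset.mem_filter.mpr ⟨Finset.mem_univ i, ?_⟩⟩
  rcases hbin i with h | h
  · exact absurd h hi
  · exact h

lemma en_scale {n : ℕ} (w : Fin n → ℝ) (c : ℂ) :
    en (fun i : Fin n => (w i : ℂ) * c) = Real.sqrt (∑ i, w i ^ 2) * ‖c‖ := by
  unfold en
  rw [← Real.sqrt_sq (norm_nonneg c), ← Real.sqrt_mul (by positivity)]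
  congr 1
  rw [Finset.sum_mul]
  apply Finset.sum_congr rfl
  intro i _
  simp [norm_mul, Complex.norm_real, Real.norm_eq_abs, mul_pow, sq_abs]

lemma binary_main {n : ℕ} (ξ : Fin n → ℂ) (hbin : ∀ i, ξ i = 0 ∨ ξ i = 1)
    (hne : ξ ≠ 0) :
    ∃ s t : ℝ, 0 < t ∧ 0 ≤ s ∧ en ξ = Real.sqrt t ∧
      (∑ j, ((xr j.val : ℝ) : ℂ) * ξ j) = ((s : ℝ) : ℂ) ∧ s ≤ 2 * Real.sqrt t := by
  classical
  refine ⟨∑ j ∈ Finset.univ.filter (fun i => ξ i = 1), xr j.val,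
    ((Finset.univ.filter (fun i => ξ i = 1)).card : ℝ), ?_, ?_, ?_, ?_, ?_⟩
  · exact_mod_cast binary_card_pos ξ hbin hne
  · exact Finset.sum_nonneg fun j _ => (xr_pos _).le
  · exact binary_en ξ hbin
  · exact binary_sum ξ hbin _
  · exact key' _

theorem stmt16 {n : ℕ} (hn : 4 ≤ n)
    (A : Matrix (Fin n) (Fin n) ℂ)
    (hA : ∀ i j, A i j =
      ((1 / Real.sqrt (((i : ℕ) + 1) * ((j : ℕ) + 1)) : ℝ) : ℂ)) :
    dnorm A < 2 / Real.sqrt (Real.log (height A)) * opNorm2 A ∧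
      pnorm A < 4 / Real.log (height A) * opNorm2 A := by
  haveI : NeZero n := ⟨by omega⟩
  set S : ℝ := ∑ i : Fin n, (1:ℝ) / ((i : ℕ) + 1) with hSdef
  set T : ℝ := ∑ i : Fin n, xr (i : ℕ) with hTdef
  -- basic entry fact
  have hAfact : ∀ i j : Fin n, A i j = ((xr i.val : ℝ) : ℂ) * ((xr j.val : ℝ) : ℂ) := by
    intro i j
    rw [hA i j]
    have : Real.sqrt ((((i:ℕ):ℝ) + 1) * (((j:ℕ):ℝ) + 1))
        = Real.sqrt (((i:ℕ):ℝ) + 1) * Real.sqrt (((j:ℕ):ℝ) + 1) :=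
      Real.sqrt_mul (by positivity) _
    unfold xr
    rw [this]
    push_cast
    rw [div_mul_div_comm, one_mul]
  -- mulVec formula
  have hmul : ∀ v : Fin n → ℂ,
      A.mulVec v = fun i => ((xr i.val : ℝ) : ℂ) * ∑ j, ((xr j.val : ℝ) : ℂ) * v j := by
    intro v
    funext i
    have h0 : A.mulVec v i = ∑ j, A i j * v j := rfl
    rw [h0, Finset.mul_sum]
    exact Finset.sum_congr rfl fun j _ => by rw [hAfact i j, mul_assoc]
  -- sum of squares
  have hxx : (∑ i : Fin n, xr i.val ^ 2) = S := by
    rw [hSdef]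
    exact Finset.sum_congr rfl (fun i _ => xr_sq _)
  have hS0 : 0 < S := by
    rw [hSdef]
    apply Finset.sum_pos (fun i _ => by positivity)
    exact Finset.univ_nonempty
  have hT0 : 0 < T := by
    rw [hTdef]
    exact Finset.sum_pos (fun i _ => xr_pos _) Finset.univ_nonempty
  -- Cauchy-Schwarz bound
  have hcs : ∀ v : Fin n → ℂ, ‖∑ j, ((xr j.val : ℝ) : ℂ) * v j‖ ≤ Real.sqrt S * en v := by
    intro v
    calc ‖∑ j, ((xr j.val : ℝ) : ℂ) * v j‖ ≤ ∑ j, ‖((xr j.val : ℝ) : ℂ) * v j‖ :=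
          norm_sum_le _ _
      _ = ∑ j : Fin n, xr j.val * ‖v j‖ := by
          apply Finset.sum_congr rfl
          intro j _
          rw [norm_mul, Complex.norm_real, Real.norm_eq_abs, abs_of_pos (xr_pos _)]
      _ ≤ Real.sqrt S * en v := by
          have hcs2 := Finset.sum_mul_sq_le_sq_mul_sq Finset.univ
            (fun j : Fin n => xr j.val) (fun j => ‖v j‖)
          rw [hxx] at hcs2
          have h1 : (0:ℝ) ≤ ∑ j : Fin n, xr j.val * ‖v j‖ :=
            Finset.sum_nonneg (fun j _ => mul_nonneg (xr_pos _).le (norm_nonneg _))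
          have h2 : Real.sqrt S * en v = Real.sqrt (S * ∑ j : Fin n, ‖v j‖ ^ 2) := by
            unfold en; rw [Real.sqrt_mul hS0.le]
          rw [h2]
          exact (Real.le_sqrt h1 (by positivity)).mpr hcs2
  -- triangle inequality step
  have htri : ∀ v : Fin n → ℂ,
      ‖∑ j : Fin n, ((xr j.val : ℝ) : ℂ) * v j‖ ≤ ∑ j : Fin n, xr j.val * ‖v j‖ := by
    intro v
    calc ‖∑ j : Fin n, ((xr j.val : ℝ) : ℂ) * v j‖
        ≤ ∑ j : Fin n, ‖((xr j.val : ℝ) : ℂ) * v j‖ := norm_sum_le _ _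
      _ = ∑ j : Fin n, xr j.val * ‖v j‖ := by
          apply Finset.sum_congr rfl
          intro j _
          rw [norm_mul, Complex.norm_real, Real.norm_eq_abs, abs_of_pos (xr_pos _)]
  -- the operator 2-norm equals S
  have hbound2 : ∀ v : Fin n → ℂ, en (A.mulVec v) ≤ S * en v := by
    intro v
    rw [hmul v, en_scale, hxx]
    calc Real.sqrt S * ‖∑ j : Fin n, ((xr j.val : ℝ) : ℂ) * v j‖
        ≤ Real.sqrt S * (Real.sqrt S * en v) :=
          mul_le_mul_of_nonneg_left (hcs v) (Real.sqrt_nonneg _)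
      _ = S * en v := by rw [← mul_assoc, Real.mul_self_sqrt hS0.le]
  have hsqrtS0 : 0 < Real.sqrt S := Real.sqrt_pos.mpr hS0
  have henx : en (fun j : Fin n => ((xr j.val : ℝ) : ℂ)) = Real.sqrt S := by
    have h := en_scale (fun j : Fin n => xr j.val) 1
    simp only [mul_one, norm_one] at h
    rw [h, hxx]
  have hop2 : opNorm2 A = S := by
    unfold opNorm2
    apply le_antisymm
    · exact csInf_le ⟨0, fun c hc => hc.1⟩ ⟨hS0.le, hbound2⟩
    · refine le_csInf ⟨S, ⟨hS0.le, hbound2⟩⟩ ?_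
      rintro C ⟨hC0, hC⟩
      have h := hC (fun j => ((xr j.val : ℝ) : ℂ))
      have hc : (∑ j : Fin n, ((xr j.val : ℝ) : ℂ) * ((xr j.val : ℝ) : ℂ)) = ((S : ℝ) : ℂ) := by
        rw [← hxx]
        push_cast
        exact Finset.sum_congr rfl fun j _ => by ring
      rw [hmul, hc, en_scale, hxx, henx, Complex.norm_real, Real.norm_eq_abs,
        abs_of_pos hS0] at h
      exact (mul_le_mul_iff_of_pos_right hsqrtS0).mp (by linarith)
  -- the operator 1-norm equals T
  have hbound1 : ∀ v : Fin n → ℂ, vn1 (A.mulVec v) ≤ T * vn1 v := by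
    intro v
    rw [hmul v]
    unfold vn1
    have h1 : ∑ i : Fin n, ‖((xr i.val : ℝ) : ℂ) * ∑ j : Fin n, ((xr j.val : ℝ) : ℂ) * v j‖
        = T * ‖∑ j : Fin n, ((xr j.val : ℝ) : ℂ) * v j‖ := by
      rw [hTdef, Finset.sum_mul]
      apply Finset.sum_congr rfl
      intro i _
      rw [norm_mul, Complex.norm_real, Real.norm_eq_abs, abs_of_pos (xr_pos _)]
    rw [h1]
    apply mul_le_mul_of_nonneg_left _ hT0.le
    calc ‖∑ j : Fin n, ((xr j.val : ℝ) : ℂ) * v j‖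
        ≤ ∑ j : Fin n, xr j.val * ‖v j‖ := htri v
      _ ≤ ∑ j : Fin n, ‖v j‖ := Finset.sum_le_sum fun j _ =>
          mul_le_of_le_one_left (norm_nonneg _) (xr_le_one _)
  obtain ⟨e0, he0⟩ : ∃ e : Fin n, (e : ℕ) = 0 := ⟨⟨0, by omega⟩, rfl⟩
  have hop1 : opNorm1 A = T := by
    unfold opNorm1
    apply le_antisymm
    · exact csInf_le ⟨0, fun c hc => hc.1⟩ ⟨hT0.le, hbound1⟩
    · refine le_csInf ⟨T, ⟨hT0.le, hbound1⟩⟩ ?_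
      rintro C ⟨hC0, hC⟩
      have h := hC (fun j => if j = e0 then (1 : ℂ) else 0)
      have hc : (∑ j : Fin n, ((xr j.val : ℝ) : ℂ) * (if j = e0 then (1 : ℂ) else 0)) = 1 := by
        rw [Finset.sum_eq_single e0]
        · simp [he0, xr_zero]
        · intro b _ hb; simp [hb]
        · intro hb; exact absurd (Finset.mem_univ e0) hb
      have hv1 : vn1 (fun j : Fin n => if j = e0 then (1 : ℂ) else 0) = 1 := by
        unfold vn1
        rw [Finset.sum_eq_single e0]
        · simp
        · intro b _ hb; simp [hb]
        · intro hb; exact absurd (Finset.mem_univ e0) hb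
      rw [hmul, hc, hv1] at h
      simp only [mul_one] at h
      refine le_trans ?_ h
      unfold vn1
      rw [hTdef]
      apply le_of_eq
      apply Finset.sum_congr rfl
      intro i _
      simp [Complex.norm_real, Real.norm_eq_abs, abs_of_pos (xr_pos (i : ℕ))]
  -- the operator ∞-norm equals T
  have hbA : ∀ v : Fin n → ℂ, BddAbove (Set.range fun i => ‖v i‖) :=
    fun v => Set.Finite.bddAbove (Set.finite_range _)
  have hboundInf : ∀ v : Fin n → ℂ, vnInf (A.mulVec v) ≤ T * vnInf v := by
    intro v
    rw [hmul v]
    unfold vnInf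
    apply ciSup_le
    intro i
    have h1 : ‖((xr i.val : ℝ) : ℂ) * ∑ j : Fin n, ((xr j.val : ℝ) : ℂ) * v j‖
        ≤ ‖∑ j : Fin n, ((xr j.val : ℝ) : ℂ) * v j‖ := by
      rw [norm_mul, Complex.norm_real, Real.norm_eq_abs, abs_of_pos (xr_pos _)]
      exact mul_le_of_le_one_left (norm_nonneg _) (xr_le_one _)
    refine h1.trans ((htri v).trans ?_)
    calc ∑ j : Fin n, xr j.val * ‖v j‖
        ≤ ∑ j : Fin n, xr j.val * ⨆ k, ‖v k‖ := Finset.sum_le_sum fun j _ =>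
          mul_le_mul_of_nonneg_left (le_ciSup (hbA v) j) (xr_pos _).le
      _ = T * ⨆ k, ‖v k‖ := by rw [hTdef, Finset.sum_mul]
  have hopInf : opNormInf A = T := by
    unfold opNormInf
    apply le_antisymm
    · exact csInf_le ⟨0, fun c hc => hc.1⟩ ⟨hT0.le, hboundInf⟩
    · refine le_csInf ⟨T, ⟨hT0.le, hboundInf⟩⟩ ?_
      rintro C ⟨hC0, hC⟩
      have h := hC (fun _ => 1)
      have hc : (∑ j : Fin n, ((xr j.val : ℝ) : ℂ) * (1 : ℂ)) = ((T : ℝ) : ℂ) := by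
        rw [hTdef]
        push_cast
        exact Finset.sum_congr rfl fun j _ => by ring
      have hv1 : vnInf (fun _ : Fin n => (1 : ℂ)) = 1 := by
        unfold vnInf
        simp [ciSup_const]
      rw [hmul, hc, hv1] at h
      simp only [mul_one] at h
      refine le_trans ?_ h
      unfold vnInf
      have hval : ‖((xr (e0 : Fin n).val : ℝ) : ℂ) * ((T : ℝ) : ℂ)‖ = T := by
        rw [norm_mul, Complex.norm_real, Complex.norm_real, Real.norm_eq_abs,
          Real.norm_eq_abs, he0, xr_zero, abs_one, one_mul, abs_of_pos hT0]
      exact le_ciSup_of_le (Set.Finite.bddAbove (Set.finite_range _)) e0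
        (le_of_eq hval.symm)
  -- height
  have hheight : height A = T / S := by
    unfold height
    rw [hop1, hopInf, hop2, Real.sqrt_mul_self hT0.le]
  -- arithmetic facts
  have hSh : S = (harmonic n : ℝ) := by
    rw [hSdef, Fin.sum_univ_eq_sum_range (fun i : ℕ => (1:ℝ) / ((i:ℝ) + 1))]
    rw [harmonic]
    push_cast
    simp [one_div]
  have hlogS : Real.log ((n : ℝ) + 1) ≤ S := by
    rw [hSh]
    have := log_add_one_le_harmonic n
    push_cast at this
    exact this
  have hS1 : 1 < S := by
    have hsub : ({⟨0, by omega⟩, ⟨1, by omega⟩} : Finset (Fin n)) ⊆ Finset.univ :=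
      Finset.subset_univ _
    have hne01 : (⟨0, by omega⟩ : Fin n) ≠ ⟨1, by omega⟩ := by
      simp [Fin.ext_iff]
    have hle : ∑ i ∈ ({⟨0, by omega⟩, ⟨1, by omega⟩} : Finset (Fin n)),
        (1:ℝ) / ((i : ℕ) + 1) ≤ S := by
      rw [hSdef]
      exact Finset.sum_le_sum_of_subset_of_nonneg hsub (fun i _ _ => by positivity)
    rw [Finset.sum_pair hne01] at hle
    norm_num at hle
    linarith
  have hTS : S < T := by
    rw [hSdef, hTdef]
    apply Finset.sum_lt_sum
    · intro i _
      unfold xr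
      apply one_div_le_one_div_of_le (by positivity)
      rw [Real.sqrt_le_left (by positivity)]
      nlinarith [Nat.cast_nonneg (α := ℝ) (i : ℕ)]
    · refine ⟨⟨1, by omega⟩, Finset.mem_univ _, ?_⟩
      show (1:ℝ) / ((1:ℕ) + 1) < xr 1
      unfold xr
      have h2 : Real.sqrt (1 + 1) < 2 := by
        have := Real.sq_sqrt (by norm_num : (0:ℝ) ≤ 1 + 1)
        nlinarith [Real.sqrt_nonneg (1 + 1 : ℝ)]
      rw [div_lt_div_iff₀ (by norm_num) (by positivity)]
      push_cast
      nlinarith [Real.sqrt_pos.mpr (by norm_num : (0:ℝ) < 1 + 1)]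
  have hT2n : T ≤ 2 * Real.sqrt n := by
    rw [hTdef]
    have h := key' (Finset.univ : Finset (Fin n))
    rwa [Finset.card_univ, Fintype.card_fin] at h
  have hTn1 : T ≤ (n : ℝ) + 1 := by
    have h1 : 2 * Real.sqrt n ≤ (n : ℝ) + 1 := by
      have hs := Real.sq_sqrt (Nat.cast_nonneg (α := ℝ) n)
      nlinarith [sq_nonneg (Real.sqrt n - 1), Real.sqrt_nonneg (n : ℝ)]
    linarith
  set L : ℝ := Real.log (T / S) with hLdef
  have hL0 : 0 < L := Real.log_pos ((one_lt_div hS0).mpr hTS)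
  have hLS : L < S := by
    have h1 : L = Real.log T - Real.log S := Real.log_div hT0.ne' hS0.ne'
    have h2 : 0 < Real.log S := Real.log_pos hS1
    have h3 : Real.log T ≤ Real.log ((n : ℝ) + 1) :=
      Real.log_le_log hT0 hTn1
    linarith
  -- discrete norm bound
  have hd : dnorm A ≤ 2 * Real.sqrt S := by
    apply Real.sSup_le _ (by positivity)
    rintro r ⟨ξ, hbin, hne, rfl⟩
    obtain ⟨s, t, ht0, hs0, henξ, hsum, hst⟩ := binary_main ξ hbin hne
    rw [hmul ξ, en_scale, hxx, hsum, henξ, Complex.norm_real, Real.norm_eq_abs,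
      abs_of_nonneg hs0]
    rw [div_le_iff₀ (Real.sqrt_pos.mpr ht0)]
    calc Real.sqrt S * s ≤ Real.sqrt S * (2 * Real.sqrt t) :=
          mul_le_mul_of_nonneg_left hst (Real.sqrt_nonneg _)
      _ = 2 * Real.sqrt S * Real.sqrt t := by ring
  -- Rayleigh norm bound
  have hp : pnorm A ≤ 4 := by
    apply Real.sSup_le _ (by norm_num)
    rintro r ⟨ξ, η, hbξ, hneξ, hbη, hneη, rfl⟩
    obtain ⟨s, t, ht0, hs0, henξ, hsumξ, hst⟩ := binary_main ξ hbξ hneξ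
    obtain ⟨u, w, hw0, hu0, henη, hsumη, huw⟩ := binary_main η hbη hneη
    have hnum : ∑ i, ∑ j, ξ i * A i j * η j = ((s : ℝ) : ℂ) * ((u : ℝ) : ℂ) := by
      have hstep : ∀ i : Fin n, ∑ j, ξ i * A i j * η j
          = (((xr i.val : ℝ) : ℂ) * ξ i) * ∑ j, ((xr j.val : ℝ) : ℂ) * η j := by
        intro i
        rw [Finset.mul_sum]
        apply Finset.sum_congr rfl
        intro j _
        rw [hAfact i j]
        ring
      rw [Finset.sum_congr rfl (fun i _ => hstep i), ← Finset.sum_mul, hsumξ, hsumη]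
    rw [hnum, henξ, henη, norm_mul, Complex.norm_real, Complex.norm_real,
      Real.norm_eq_abs, Real.norm_eq_abs, abs_of_nonneg hs0, abs_of_nonneg hu0]
    rw [div_le_iff₀ (by positivity)]
    calc s * u ≤ (2 * Real.sqrt t) * (2 * Real.sqrt w) :=
          mul_le_mul hst huw hu0 (by positivity)
      _ = 4 * (Real.sqrt t * Real.sqrt w) := by ring
  -- conclusion
  rw [hheight, hop2, ← hLdef]
  constructor
  · apply lt_of_le_of_lt hd
    rw [div_mul_eq_mul_div, lt_div_iff₀ (Real.sqrt_pos.mpr hL0)]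
    have hlt : Real.sqrt L < Real.sqrt S := Real.sqrt_lt_sqrt hL0.le hLS
    calc 2 * Real.sqrt S * Real.sqrt L < 2 * Real.sqrt S * Real.sqrt S := by
          apply mul_lt_mul_of_pos_left hlt (by positivity)
      _ = 2 * S := by rw [mul_assoc, Real.mul_self_sqrt hS0.le]
  · apply lt_of_le_of_lt hp
    rw [div_mul_eq_mul_div, lt_div_iff₀ hL0]
    linarith
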